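/- Between any two nondegenerate closed intervals with dyadic rational endpoints there exists a piecewise-linear homeomorphism, with finitely many breakpoints, such that all slopes are powers of 2 and all breakpoints have dyadic rational coordinates. -/

import Mathlib

/-- A real number is a dyadic rational if it is of the form k / 2^m. -/
def IsDyadic (x : ℝ) : Prop := ∃ (k : ℤ) (m : ℕ), x = (k : ℝ) / 2 ^ m

lemma IsDyadic.add {x y : ℝ} (hx : IsDyadic x) (hy : IsDyadic y) : IsDyadic (x + y) := by
  obtain ⟨k1, m1, rfl⟩ := hx
  obtain ⟨k2, m2, rfl⟩ := hy
  refine ⟨k1 * 2 ^ m2 + k2 * 2 ^ m1, m1 + m2, ?_⟩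
  push_cast
  rw [pow_add]
  field_simp

lemma IsDyadic.neg {x : ℝ} (hx : IsDyadic x) : IsDyadic (-x) := by
  obtain ⟨k, m, rfl⟩ := hx
  exact ⟨-k, m, by push_cast; ring⟩

lemma isDyadic_int_mul_zpow (k z : ℤ) : IsDyadic ((k : ℝ) * 2 ^ z) := by
  rcases le_or_gt 0 z with hz | hz
  · refine ⟨k * 2 ^ z.toNat, 0, ?_⟩
    push_cast
    rw [← zpow_natCast (2:ℝ), Int.toNat_of_nonneg hz]
    ring
  · refine ⟨k, (-z).toNat, ?_⟩
    rw [div_eq_mul_inv, ← zpow_natCast (2:ℝ), Int.toNat_of_nonneg (by omega), ← zpow_neg, neg_neg]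

lemma isDyadic_zpow (z : ℤ) : IsDyadic ((2:ℝ) ^ z) := by
  simpa using isDyadic_int_mul_zpow 1 z

lemma IsDyadic.zpow_mul {x : ℝ} (z : ℤ) (hx : IsDyadic x) : IsDyadic ((2:ℝ) ^ z * x) := by
  obtain ⟨k, m, rfl⟩ := hx
  have : (2:ℝ) ^ z * ((k:ℝ) / 2 ^ m) = (k : ℝ) * 2 ^ (z - m) := by
    rw [zpow_sub₀ (two_ne_zero), zpow_natCast]
    ring
  rw [this]
  exact isDyadic_int_mul_zpow k (z - m)

def SumPow (N : ℕ) (L : ℝ) : Prop := ∃ e : ℕ → ℤ, ∑ i ∈ Finset.range N, (2:ℝ) ^ (e i) = L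

lemma SumPow.succ {N : ℕ} {L : ℝ} (h : SumPow N L) (hN : 1 ≤ N) : SumPow (N + 1) L := by
  obtain ⟨M, rfl⟩ : ∃ M, N = M + 1 := ⟨N - 1, (Nat.succ_pred_eq_of_pos hN).symm⟩
  obtain ⟨e, he⟩ := h
  refine ⟨fun i => if i < M then e i else e M - 1, ?_⟩
  rw [Finset.sum_range_succ, Finset.sum_range_succ]
  beta_reduce
  rw [if_neg (by omega : ¬ (M + 1 < M)), if_neg (by omega : ¬ (M < M))]
  have hcong : ∑ i ∈ Finset.range M, (2:ℝ) ^ (if i < M then e i else e M - 1) =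
      ∑ i ∈ Finset.range M, (2:ℝ) ^ (e i) := by
    refine Finset.sum_congr rfl fun i hi => ?_
    rw [if_pos (Finset.mem_range.mp hi)]
  rw [hcong]
  have h2 : (2:ℝ) ^ (e M - 1) + (2:ℝ) ^ (e M - 1) = 2 ^ (e M) := by
    have hEM : e M = (e M - 1) + 1 := by ring
    rw [hEM, zpow_add_one₀ (two_ne_zero : (2:ℝ) ≠ 0)]
    ring_nf
  rw [Finset.sum_range_succ] at he
  linarith

lemma SumPow.le {N M : ℕ} {L : ℝ} (h : SumPow N L) (hN : 1 ≤ N) (hNM : N ≤ M) : SumPow M L := by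
  induction M, hNM using Nat.le_induction with
  | base => exact h
  | succ M hM ih => exact ih.succ (le_trans hN hM)

lemma exists_sumPow {L : ℝ} (hL : IsDyadic L) (hL0 : 0 < L) : ∃ N, 1 ≤ N ∧ SumPow N L := by
  obtain ⟨k, m, rfl⟩ := hL
  have hk : 0 < k := by
    have h2m : (0:ℝ) < 2 ^ m := by positivity
    have hcan : (k:ℝ) / 2 ^ m * 2 ^ m = k := div_mul_cancel₀ _ (by positivity)
    have : (0:ℝ) < k := by nlinarith [mul_pos hL0 h2m]
    exact_mod_cast this
  refine ⟨k.toNat, by omega, fun _ => -m, ?_⟩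
  rw [Finset.sum_const, Finset.card_range, nsmul_eq_mul]
  rw [zpow_neg, zpow_natCast, div_eq_mul_inv]
  congr 1
  exact_mod_cast Int.toNat_of_nonneg hk.le

/-- Between any two nondegenerate closed intervals with dyadic rational endpoints there
is an increasing piecewise-linear homeomorphism with finitely many breakpoints, all
slopes powers of 2, and all breakpoints at dyadic rational coordinates. -/
theorem exists_thompson_like_homeomorphism (a b c d : ℝ)
    (hab : a < b) (hcd : c < d)
    (ha : IsDyadic a) (hb : IsDyadic b) (hc : IsDyadic c) (hd : IsDyadic d) :
    ∃ (h : ℝ → ℝ) (N : ℕ) (q : ℕ → ℝ),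
      q 0 = a ∧ q N = b ∧ (∀ i : ℕ, i < N → q i < q (i + 1)) ∧
      (∀ i : ℕ, i ≤ N → IsDyadic (q i) ∧ IsDyadic (h (q i))) ∧
      (∀ i : ℕ, i < N → ∃ (n : ℤ) (e : ℝ), IsDyadic e ∧
        ∀ x ∈ Set.Icc (q i) (q (i + 1)), h x = (2 : ℝ) ^ n * x + e) ∧
      StrictMonoOn h (Set.Icc a b) ∧ h '' Set.Icc a b = Set.Icc c d ∧
      h a = c ∧ h b = d := by
  have hL1d : IsDyadic (b - a) := by
    simpa [sub_eq_add_neg] using hb.add ha.neg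
  have hL2d : IsDyadic (d - c) := by
    simpa [sub_eq_add_neg] using hd.add hc.neg
  obtain ⟨N1, hN1, hS1⟩ := exists_sumPow hL1d (by linarith)
  obtain ⟨N2, hN2, hS2⟩ := exists_sumPow hL2d (by linarith)
  obtain ⟨f, hf⟩ : SumPow (max N1 N2) (b - a) := hS1.le hN1 (le_max_left _ _)
  obtain ⟨g, hg⟩ : SumPow (max N1 N2) (d - c) := hS2.le hN2 (le_max_right _ _)
  set N := max N1 N2 with hNdef
  have hNpos : 1 ≤ N := le_trans hN1 (le_max_left _ _)
  set q : ℕ → ℝ := fun i => a + ∑ j ∈ Finset.range i, (2:ℝ) ^ (f j) with hq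
  set r : ℕ → ℝ := fun i => c + ∑ j ∈ Finset.range i, (2:ℝ) ^ (g j) with hr
  set s : ℕ → ℝ := fun i => (2:ℝ) ^ (g i - f i) with hs
  set h : ℝ → ℝ :=
    fun x => c + ∑ i ∈ Finset.range N, s i * (min (max x (q i)) (q (i+1)) - q i) with hH
  have hqsucc : ∀ i, q (i+1) = q i + 2 ^ (f i) := by
    intro i; simp only [hq, Finset.sum_range_succ]; ring
  have hrsucc : ∀ i, r (i+1) = r i + 2 ^ (g i) := by
    intro i; simp only [hr, Finset.sum_range_succ]; ring
  have hqmono : StrictMono q := by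
    apply strictMono_nat_of_lt_succ
    intro i
    have h0 : (0:ℝ) < 2 ^ (f i) := by positivity
    rw [hqsucc]; linarith
  have hq0 : q 0 = a := by simp [hq]
  have hqN : q N = b := by simp only [hq]; rw [hf]; ring
  have hr0 : r 0 = c := by simp [hr]
  have hrN : r N = d := by simp only [hr]; rw [hg]; ring
  have hspos : ∀ i, (0:ℝ) < s i := by intro i; rw [hs]; positivity
  have hsf : ∀ i, s i * 2 ^ (f i) = 2 ^ (g i) := by
    intro i
    rw [hs, ← zpow_add₀ (two_ne_zero : (2:ℝ) ≠ 0), sub_add_cancel]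
  -- the piece formula
  have hpiece : ∀ j, j < N → ∀ x ∈ Set.Icc (q j) (q (j+1)),
      h x = s j * x + (r j - s j * q j) := by
    intro j hj x hx
    obtain ⟨hx1, hx2⟩ := hx
    have key : ∀ i ∈ Finset.range N, s i * (min (max x (q i)) (q (i+1)) - q i)
        = (if i ∈ Finset.range j then (2:ℝ) ^ (g i) else 0)
          + (if i = j then s j * (x - q j) else 0) := by
      intro i _
      rcases lt_trichotomy i j with hij | rfl | hij
      · have h1 : q (i+1) ≤ x := le_trans (hqmono.monotone (by omega)) hx1
        have h2 : q i ≤ x := le_trans (hqmono.monotone (by omega)) hx1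
        rw [max_eq_left h2, min_eq_right h1, if_pos (Finset.mem_range.mpr hij),
          if_neg (by omega), add_zero]
        have hd : q (i+1) - q i = 2 ^ (f i) := by rw [hqsucc]; ring
        rw [hd, hsf]
      · rw [max_eq_left hx1, min_eq_left hx2, if_neg (by simp), if_pos rfl, zero_add]
      · have h1 : x ≤ q i := le_trans hx2 (hqmono.monotone (by omega))
        rw [max_eq_right h1, min_eq_left (hqmono.monotone (by omega) : q i ≤ q (i+1)),
          if_neg (by simp; omega), if_neg (by omega), sub_self, mul_zero, add_zero]
    have hinter : Finset.range N ∩ Finset.range j = Finset.range j := by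
      ext t; simp only [Finset.mem_inter, Finset.mem_range]; omega
    calc h x = c + ∑ i ∈ Finset.range N,
          ((if i ∈ Finset.range j then (2:ℝ) ^ (g i) else 0)
            + (if i = j then s j * (x - q j) else 0)) := by
            rw [hH]; exact congrArg (c + ·) (Finset.sum_congr rfl key)
      _ = c + ((∑ i ∈ Finset.range j, (2:ℝ) ^ (g i)) + s j * (x - q j)) := by
            rw [Finset.sum_add_distrib, Finset.sum_ite_mem, hinter,
              Finset.sum_ite_eq' (Finset.range N) j, if_pos (Finset.mem_range.mpr hj)]
      _ = s j * x + (r j - s j * q j) := by rw [hr]; ring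
  have hhq : ∀ j, j ≤ N → h (q j) = r j := by
    intro j hj
    rcases Nat.lt_or_ge j N with hjN | hjN
    · rw [hpiece j hjN (q j) ⟨le_refl _, (hqmono (lt_add_one j)).le⟩]; ring
    · have hjeq : j = N := le_antisymm hj hjN
      subst hjeq
      have hNe : N - 1 + 1 = N := by omega
      have hxmem : q N ∈ Set.Icc (q (N-1)) (q (N-1+1)) := by
        rw [hNe]; exact ⟨(hqmono.monotone (by omega)), le_refl _⟩
      rw [hpiece (N-1) (by omega) (q N) hxmem]
      have e1 := hqsucc (N-1)
      rw [hNe] at e1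
      have e2 := hrsucc (N-1)
      rw [hNe] at e2
      have e3 := hsf (N-1)
      rw [e1, e2]; ring_nf
      ring_nf at e3; linarith
  have hmono : StrictMonoOn h (Set.Icc a b) := by
    rintro x ⟨hax, hxb⟩ y ⟨hay, hyb⟩ hxy
    rw [hH]
    apply add_lt_add_right
    apply Finset.sum_lt_sum
    · intro i _
      have hclamp : min (max x (q i)) (q (i+1)) ≤ min (max y (q i)) (q (i+1)) :=
        min_le_min (max_le_max hxy.le le_rfl) le_rfl
      exact mul_le_mul_of_nonneg_left (by linarith) (hspos i).le
    · have hxN : x < q (N - 1 + 1) := by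
        rw [show N - 1 + 1 = N from by omega, hqN]; exact lt_of_lt_of_le hxy hyb
      have hex : ∃ j, x < q (j+1) := ⟨N-1, hxN⟩
      have hj1 : x < q (Nat.find hex + 1) := Nat.find_spec hex
      have hjN : Nat.find hex < N := by
        have := Nat.find_min' hex hxN; omega
      have hqjx : q (Nat.find hex) ≤ x := by
        rcases Nat.eq_zero_or_pos (Nat.find hex) with h0 | h0
        · rw [h0, hq0]; exact hax
        · have hmin := Nat.find_min hex (show Nat.find hex - 1 < Nat.find hex by omega)
          push_neg at hmin
          calc q (Nat.find hex) = q (Nat.find hex - 1 + 1) := by congr 1; omega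
            _ ≤ x := hmin
      refine ⟨Nat.find hex, Finset.mem_range.mpr hjN, ?_⟩
      have hcx : min (max x (q (Nat.find hex))) (q (Nat.find hex + 1)) = x := by
        rw [max_eq_left hqjx, min_eq_left hj1.le]
      have hcy : x < min (max y (q (Nat.find hex))) (q (Nat.find hex + 1)) := by
        rw [max_eq_left (le_trans hqjx hxy.le)]
        exact lt_min hxy hj1
      apply mul_lt_mul_of_pos_left _ (hspos _)
      rw [hcx]
      linarith
  have hcont : Continuous h := by
    rw [hH]
    exact continuous_const.add (continuous_finset_sum _ fun i _ =>
      continuous_const.mul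
        (((continuous_id.max continuous_const).min continuous_const).sub continuous_const))
  have hha : h a = c := by have := hhq 0 (by omega); rwa [hq0, hr0] at this
  have hhb : h b = d := by have := hhq N le_rfl; rwa [hqN, hrN] at this
  have himg : h '' Set.Icc a b = Set.Icc c d := by
    apply Set.Subset.antisymm
    · rintro _ ⟨x, hx, rfl⟩
      constructor
      · rw [← hha]
        exact hmono.monotoneOn (Set.left_mem_Icc.mpr hab.le) hx hx.1
      · rw [← hhb]
        exact hmono.monotoneOn hx (Set.right_mem_Icc.mpr hab.le) hx.2
    · intro t ht
      have hIV := intermediate_value_Icc hab.le hcont.continuousOn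
      rw [hha, hhb] at hIV
      exact hIV ht
  have hqd : ∀ i, IsDyadic (q i) := by
    intro i
    induction i with
    | zero => rw [hq0]; exact ha
    | succ i ih => rw [hqsucc]; exact ih.add (isDyadic_zpow (f i))
  have hrd : ∀ i, IsDyadic (r i) := by
    intro i
    induction i with
    | zero => rw [hr0]; exact hc
    | succ i ih => rw [hrsucc]; exact ih.add (isDyadic_zpow (g i))
  refine ⟨h, N, q, hq0, hqN, fun i _ => hqmono (lt_add_one i),
    fun i hi => ⟨hqd i, by rw [hhq i hi]; exact hrd i⟩,
    fun i hi => ⟨g i - f i, r i - s i * q i, ?_, fun x hx => by rw [hpiece i hi x hx, hs]⟩,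
    hmono, himg, hha, hhb⟩
  have := (hrd i).add (((hqd i).zpow_mul (g i - f i)).neg)
  simpa [hs, sub_eq_add_neg] using this
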